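/- Let p be a prime and S ⊆ ℤ_p with |S| ≥ 2 and m ≤ |S|/4. Partition S randomly into m parts S_1, ..., S_m with sizes as equal as possible, and then independently select one uniformly random element X_i from each part S_i. Then the resulting set R = {X_1, ..., X_m} is distributed as a uniformly random subset of S of size m. -/

import Mathlib

open scoped Classical

/-- `𝒮` is an ordered partition of `S` into `m` parts with sizes as equal as possible:
each part has size `⌊|S|/m⌋` or `⌊|S|/m⌋ + 1`, and exactly the first `|S| mod m` parts
(those with index `i < |S| mod m`) have the larger size. -/
def IsBalancedPartition {p : ℕ} (S : Finset (ZMod p)) (m : ℕ)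
    (𝒮 : Fin m → Finset (ZMod p)) : Prop :=
  (∀ i j : Fin m, i ≠ j → Disjoint (𝒮 i) (𝒮 j)) ∧
    S = Finset.univ.biUnion 𝒮 ∧
    ∀ i : Fin m, (𝒮 i).card = if (i : ℕ) < S.card % m then S.card / m + 1 else S.card / m

/-- The pairs `(𝒮, X)` of a balanced ordered partition `𝒮` of `S` into `m` parts together
with a transversal `X` selecting one element from each part. All such pairs are
equally likely in the two-step sampling procedure. -/
noncomputable def partitionTransversals (p : ℕ) [NeZero p] (S : Finset (ZMod p)) (m : ℕ) :
    Finset ((Fin m → Finset (ZMod p)) × (Fin m → ZMod p)) :=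
  Finset.univ.filter fun τ => IsBalancedPartition S m τ.1 ∧ ∀ i, τ.2 i ∈ τ.1 i

section Aux

variable {p : ℕ} [NeZero p]

lemma mem_pt {S : Finset (ZMod p)} {m : ℕ}
    {τ : (Fin m → Finset (ZMod p)) × (Fin m → ZMod p)} :
    τ ∈ partitionTransversals p S m ↔
      IsBalancedPartition S m τ.1 ∧ ∀ i, τ.2 i ∈ τ.1 i := by
  simp [partitionTransversals]

lemma part_subset {S : Finset (ZMod p)} {m : ℕ} {𝒮 : Fin m → Finset (ZMod p)}
    (h : IsBalancedPartition S m 𝒮) (i : Fin m) : 𝒮 i ⊆ S := by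
  rw [h.2.1]
  exact Finset.subset_biUnion_of_mem 𝒮 (Finset.mem_univ i)

/-- interval covering helper -/
lemma exists_block (o : ℕ → ℕ) (h0 : o 0 = 0) :
    ∀ m k, k < o m → ∃ i, i < m ∧ o i ≤ k ∧ k < o (i + 1) := by
  intro m
  induction m with
  | zero => intro k hk; omega
  | succ m ih =>
    intro k hk
    by_cases h : k < o m
    · obtain ⟨i, hi, h1, h2⟩ := ih k h
      exact ⟨i, by omega, h1, h2⟩
    · exact ⟨m, by omega, by omega, hk⟩

/-- Existence of a pair with prescribed transversal image. -/
lemma exists_pair (S : Finset (ZMod p)) (m : ℕ) (hm : 0 < m) (hmS : m ≤ S.card)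
    (R : Finset (ZMod p)) (hRS : R ⊆ S) (hR : R.card = m) :
    ∃ τ ∈ partitionTransversals p S m, Finset.image τ.2 Finset.univ = R := by
  set n := S.card with hn
  set q := n / m with hq
  set rr := n % m with hrr
  have hq1 : 1 ≤ q := Nat.one_le_div_iff hm |>.2 hmS
  have hrrm : rr < m := Nat.mod_lt _ hm
  set s' : ℕ → ℕ := fun j => if j < rr then q + 1 else q with hs'
  have hs1 : ∀ j, 1 ≤ s' j := by intro j; simp only [hs']; split <;> omega
  have hsum : ∑ j ∈ Finset.range m, s' j = n := by
    have h1 : ∑ j ∈ Finset.range m, s' j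
        = ∑ j ∈ Finset.range m, (q + if j < rr then 1 else 0) :=
      Finset.sum_congr rfl (fun j _ => by simp only [hs']; split <;> omega)
    have h2 : (Finset.range m).filter (fun j => j < rr) = Finset.range rr := by
      ext j; simp only [Finset.mem_filter, Finset.mem_range]; omega
    have h3 : ∑ x ∈ Finset.range m, (if x < rr then 1 else 0) = rr := by
      rw [← Finset.sum_filter, h2, Finset.sum_const, smul_eq_mul, mul_one,
        Finset.card_range]
    rw [h1, Finset.sum_add_distrib, h3, Finset.sum_const, Finset.card_range,
      smul_eq_mul, hq, hrr]
    exact Nat.div_add_mod n m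
  set o : ℕ → ℕ := fun k => ∑ j ∈ Finset.range k, (s' j - 1) with ho
  have ho0 : o 0 = 0 := by simp [ho]
  have hosucc : ∀ k, o (k + 1) = o k + (s' k - 1) := by
    intro k; simp [ho, Finset.sum_range_succ]
  have homono : Monotone o := by
    intro a b hab
    exact Finset.sum_le_sum_of_subset (by simpa [Finset.range_subset_range] using hab)
  have hom : o m = n - m := by
    have h2 : ∑ j ∈ Finset.range m, s' j
        = ∑ j ∈ Finset.range m, ((s' j - 1) + 1) :=
      Finset.sum_congr rfl (fun j _ => by have := hs1 j; omega)
    rw [Finset.sum_add_distrib, Finset.sum_const, Finset.card_range,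
      smul_eq_mul, mul_one] at h2
    have h3 : o m = ∑ j ∈ Finset.range m, (s' j - 1) := rfl
    omega
  set T := S \ R with hTdef
  have hT : T.card = n - m := by
    rw [hTdef, Finset.card_sdiff_of_subset hRS, hR]
  set r : Fin m → ZMod p := fun i => (R.equivFin.symm ⟨i.1, by rw [hR]; exact i.2⟩ : ZMod p)
    with hrdef
  have hrinj : Function.Injective r := by
    intro a b hab
    simp only [hrdef] at hab
    have h2 := R.equivFin.symm.injective (Subtype.coe_injective hab)
    have h3 := congrArg Fin.val h2
    exact Fin.ext h3
  have hrmem : ∀ i, r i ∈ R := fun i => (R.equivFin.symm _).2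
  set g : ℕ → ZMod p := fun k => if h : k < T.card then (T.equivFin.symm ⟨k, h⟩ : ZMod p) else 0
    with hgdef
  have hgmem : ∀ k, k < T.card → g k ∈ T := by
    intro k hk; simp only [hgdef, dif_pos hk]; exact (T.equivFin.symm _).2
  have hginj : ∀ k k', k < T.card → k' < T.card → g k = g k' → k = k' := by
    intro k k' hk hk' h
    simp only [hgdef, dif_pos hk, dif_pos hk'] at h
    have := T.equivFin.symm.injective (Subtype.coe_injective h)
    simpa using congrArg Fin.val this
  set 𝒮 : Fin m → Finset (ZMod p) :=
    fun i => insert (r i) ((Finset.Ico (o i.1) (o (i.1 + 1))).image g) with h𝒮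
  have houb : ∀ i : Fin m, o (i.1 + 1) ≤ T.card := by
    intro i
    rw [hT, ← hom]
    exact homono i.2
  have hblock : ∀ (i : Fin m) (x : ZMod p),
      x ∈ (Finset.Ico (o i.1) (o (i.1 + 1))).image g → x ∈ T := by
    intro i x hx
    obtain ⟨k, hk, rfl⟩ := Finset.mem_image.1 hx
    rw [Finset.mem_Ico] at hk
    exact hgmem k (lt_of_lt_of_le hk.2 (houb i))
  refine ⟨⟨𝒮, r⟩, mem_pt.2 ⟨⟨?_, ?_, ?_⟩, ?_⟩, ?_⟩
  · -- disjoint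
    intro i j hij
    rw [Finset.disjoint_left]
    intro x hxi hxj
    simp only [h𝒮, Finset.mem_insert] at hxi hxj
    have hRT : ∀ y, y ∈ R → y ∈ T → False := by
      intro y hy hy'
      rw [hTdef, Finset.mem_sdiff] at hy'
      exact hy'.2 hy
    rcases hxi with rfl | hxi
    · rcases hxj with h | hxj
      · exact hij (hrinj h)
      · exact hRT _ (hrmem i) (hblock j _ hxj)
    · rcases hxj with rfl | hxj
      · exact hRT _ (hrmem j) (hblock i _ hxi)
      · obtain ⟨k, hk, hgk⟩ := Finset.mem_image.1 hxi
        obtain ⟨k', hk', hgk'⟩ := Finset.mem_image.1 hxj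
        rw [Finset.mem_Ico] at hk hk'
        have hkT : k < T.card := lt_of_lt_of_le hk.2 (houb i)
        have hkT' : k' < T.card := lt_of_lt_of_le hk'.2 (houb j)
        have hkk : k = k' := hginj _ _ hkT hkT' (hgk.trans hgk'.symm)
        -- Ico's are disjoint
        have hij' : i.1 ≠ j.1 := fun h => hij (Fin.ext h)
        rcases Nat.lt_or_ge i.1 j.1 with h | h
        · have := homono (show i.1 + 1 ≤ j.1 by omega)
          omega
        · have := homono (show j.1 + 1 ≤ i.1 by omega)
          omega
  · -- union = S
    apply Finset.Subset.antisymm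
    · intro x hx
      rw [Finset.mem_biUnion]
      by_cases hxR : x ∈ R
      · refine ⟨⟨(R.equivFin ⟨x, hxR⟩).1, by rw [← hR]; exact (R.equivFin ⟨x, hxR⟩).2⟩,
          Finset.mem_univ _, ?_⟩
        simp only [h𝒮, Finset.mem_insert]
        left
        simp only [hrdef]
        have : (⟨(R.equivFin ⟨x, hxR⟩).1, (R.equivFin ⟨x, hxR⟩).2⟩ : Fin R.card)
            = R.equivFin ⟨x, hxR⟩ := rfl
        rw [this, Equiv.symm_apply_apply]
      · have hxT : x ∈ T := by rw [hTdef, Finset.mem_sdiff]; exact ⟨hx, hxR⟩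
        set k := (T.equivFin ⟨x, hxT⟩).1 with hk
        have hkT : k < T.card := (T.equivFin ⟨x, hxT⟩).2
        have hkom : k < o m := by rw [hom, ← hT]; exact hkT
        obtain ⟨i, him, h1, h2⟩ := exists_block o ho0 m k hkom
        refine ⟨⟨i, him⟩, Finset.mem_univ _, ?_⟩
        simp only [h𝒮, Finset.mem_insert]
        right
        rw [Finset.mem_image]
        refine ⟨k, Finset.mem_Ico.2 ⟨h1, h2⟩, ?_⟩
        simp only [hgdef, dif_pos hkT]
        have : (⟨k, hkT⟩ : Fin T.card) = T.equivFin ⟨x, hxT⟩ := rfl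
        rw [this, Equiv.symm_apply_apply]
    · intro x hx
      rw [Finset.mem_biUnion] at hx
      obtain ⟨i, _, hxi⟩ := hx
      simp only [h𝒮, Finset.mem_insert] at hxi
      rcases hxi with rfl | hxi
      · exact hRS (hrmem i)
      · have := hblock i x hxi
        rw [hTdef, Finset.mem_sdiff] at this
        exact this.1
  · -- cards
    intro i
    have hnotmem : r i ∉ (Finset.Ico (o i.1) (o (i.1 + 1))).image g := by
      intro h
      have := hblock i _ h
      rw [hTdef, Finset.mem_sdiff] at this
      exact this.2 (hrmem i)
    have hcardimg : ((Finset.Ico (o i.1) (o (i.1 + 1))).image g).card = s' i.1 - 1 := by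
      rw [Finset.card_image_of_injOn, Nat.card_Ico, hosucc]
      · omega
      · intro a ha b hb hab
        rw [Finset.mem_coe, Finset.mem_Ico] at ha hb
        exact hginj a b (lt_of_lt_of_le ha.2 (houb i)) (lt_of_lt_of_le hb.2 (houb i)) hab
    simp only [h𝒮]
    rw [Finset.card_insert_of_notMem hnotmem, hcardimg]
    have := hs1 i.1
    simp only [hs']
    rw [← hn, ← hrr, ← hq]
    split <;> omega
  · intro i
    simp [h𝒮]
  · -- image = R
    apply Finset.eq_of_subset_of_card_le
    · intro x hx
      obtain ⟨i, _, rfl⟩ := Finset.mem_image.1 hx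
      exact hrmem i
    · rw [hR, Finset.card_image_of_injective _ hrinj, Finset.card_univ, Fintype.card_fin]

/-- Action of a permutation on the pairs, preserving everything. -/
lemma perm_filter_card (S : Finset (ZMod p)) (m : ℕ) (σ : Equiv.Perm (ZMod p))
    (hσ : S.image σ = S) (R : Finset (ZMod p)) :
    ((partitionTransversals p S m).filter fun τ =>
        Finset.image τ.2 Finset.univ = R).card =
    ((partitionTransversals p S m).filter fun τ =>
        Finset.image τ.2 Finset.univ = R.image σ).card := by
  have key : ∀ (σ : Equiv.Perm (ZMod p)), S.image σ = S →
      ∀ τ ∈ partitionTransversals p S m,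
        (fun i => (τ.1 i).image σ, σ ∘ τ.2) ∈ partitionTransversals p S m := by
    intro σ hσ τ hτ
    obtain ⟨⟨hdisj, hunion, hcard⟩, htrans⟩ := mem_pt.1 hτ
    refine mem_pt.2 ⟨⟨?_, ?_, ?_⟩, ?_⟩
    · intro i j hij
      exact (Finset.disjoint_image σ.injective).2 (hdisj i j hij)
    · show S = Finset.univ.biUnion (fun i => (τ.1 i).image σ)
      have h4 : Finset.univ.biUnion (fun i => (τ.1 i).image σ)
          = (Finset.univ.biUnion τ.1).image σ := (Finset.biUnion_image).symm
      rw [h4, ← hunion, hσ]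
    · intro i
      show ((τ.1 i).image σ).card = _
      rw [Finset.card_image_of_injective _ σ.injective]
      exact hcard i
    · intro i
      exact Finset.mem_image_of_mem σ (htrans i)
  refine Finset.card_bij' (fun τ _ => (fun i => (τ.1 i).image σ, σ ∘ τ.2))
    (fun τ _ => (fun i => (τ.1 i).image σ.symm, σ.symm ∘ τ.2)) ?_ ?_ ?_ ?_
  · intro τ hτ
    simp only [Finset.mem_filter] at hτ ⊢
    refine ⟨key σ hσ τ hτ.1, ?_⟩
    show Finset.image (σ ∘ τ.2) Finset.univ = R.image σ
    rw [← Finset.image_image, hτ.2]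
  · intro τ hτ
    simp only [Finset.mem_filter] at hτ ⊢
    have hσ' : S.image σ.symm = S := by
      conv_lhs => rw [← hσ]
      rw [Finset.image_image]
      simp
    refine ⟨key σ.symm hσ' τ hτ.1, ?_⟩
    show Finset.image (σ.symm ∘ τ.2) Finset.univ = R
    rw [← Finset.image_image, hτ.2, Finset.image_image]
    simp
  · intro τ _
    refine Prod.ext ?_ ?_
    · funext i
      show ((τ.1 i).image σ).image σ.symm = τ.1 i
      rw [Finset.image_image]; simp
    · funext i
      simp
  · intro τ _
    refine Prod.ext ?_ ?_
    · funext i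
      show ((τ.1 i).image σ.symm).image σ = τ.1 i
      rw [Finset.image_image]; simp
    · funext i
      simp

/-- A permutation of `ZMod p` stabilizing `S` and mapping `R` to `R'`. -/
lemma exists_perm (S R R' : Finset (ZMod p)) (hRS : R ⊆ S) (hR'S : R' ⊆ S)
    (hcard : R.card = R'.card) :
    ∃ σ : Equiv.Perm (ZMod p), S.image σ = S ∧ R.image σ = R' := by
  have hc2 : (S \ R).card = (S \ R').card := by
    rw [Finset.card_sdiff_of_subset hRS, Finset.card_sdiff_of_subset hR'S, hcard]
  have e1 : {x // x ∈ R} ≃ {x // x ∈ R'} := R.equivFin.trans ((Fin.castOrderIso hcard).toEquiv.trans R'.equivFin.symm)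
  have e2 : {x // x ∈ S \ R} ≃ {x // x ∈ S \ R'} :=
    (S \ R).equivFin.trans ((Fin.castOrderIso hc2).toEquiv.trans (S \ R').equivFin.symm)
  set f : ZMod p → ZMod p := fun x =>
    if hx : x ∈ R then (e1 ⟨x, hx⟩ : ZMod p)
    else if hx' : x ∈ S \ R then (e2 ⟨x, hx'⟩ : ZMod p)
    else x with hf
  have hfS : ∀ x ∈ S, f x ∈ S := by
    intro x hx
    simp only [hf]
    split
    · next hx1 => exact hR'S (e1 ⟨x, hx1⟩).2
    · next hx1 =>
        split
        · next hx2 =>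
            have h2 := (e2 ⟨x, hx2⟩).2
            rw [Finset.mem_sdiff] at h2
            exact h2.1
        · exact hx
  have hfR : ∀ x ∈ R, f x ∈ R' := by
    intro x hx
    simp only [hf, dif_pos hx]
    exact (e1 _).2
  have hfinj : Function.Injective f := by
    intro a b hab
    simp only [hf] at hab
    by_cases ha : a ∈ R <;> by_cases hb : b ∈ R
    · rw [dif_pos ha, dif_pos hb] at hab
      have := e1.injective (Subtype.coe_injective hab)
      exact congrArg Subtype.val this
    · rw [dif_pos ha] at hab
      have h1 : (e1 ⟨a, ha⟩ : ZMod p) ∈ R' := (e1 _).2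
      rw [dif_neg hb] at hab
      by_cases hb' : b ∈ S \ R
      · rw [dif_pos hb'] at hab
        have h2 := (e2 ⟨b, hb'⟩).2
        rw [Finset.mem_sdiff] at h2
        exact absurd (hab ▸ h1) h2.2
      · rw [dif_neg hb'] at hab
        rw [Finset.mem_sdiff] at hb'
        subst hab
        exact absurd (hR'S h1) (by tauto)
    · rw [dif_pos hb] at hab
      have h1 : (e1 ⟨b, hb⟩ : ZMod p) ∈ R' := (e1 _).2
      rw [dif_neg ha] at hab
      by_cases ha' : a ∈ S \ R
      · rw [dif_pos ha'] at hab
        have h2 := (e2 ⟨a, ha'⟩).2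
        rw [Finset.mem_sdiff] at h2
        exact absurd (hab.symm ▸ h1) h2.2
      · rw [dif_neg ha'] at hab
        rw [Finset.mem_sdiff] at ha'
        subst hab
        exact absurd (hR'S h1) (by tauto)
    · rw [dif_neg ha, dif_neg hb] at hab
      by_cases ha' : a ∈ S \ R <;> by_cases hb' : b ∈ S \ R
      · rw [dif_pos ha', dif_pos hb'] at hab
        have := e2.injective (Subtype.coe_injective hab)
        exact congrArg Subtype.val this
      · rw [dif_pos ha', dif_neg hb'] at hab
        have h2 := (e2 ⟨a, ha'⟩).2
        rw [Finset.mem_sdiff] at h2 hb'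
        subst hab
        exact absurd h2.1 (by tauto)
      · rw [dif_neg ha', dif_pos hb'] at hab
        have h2 := (e2 ⟨b, hb'⟩).2
        rw [Finset.mem_sdiff] at h2 ha'
        subst hab
        exact absurd h2.1 (by tauto)
      · rw [dif_neg ha', dif_neg hb'] at hab
        exact hab
  have hfbij : Function.Bijective f := Finite.injective_iff_bijective.1 hfinj
  refine ⟨Equiv.ofBijective f hfbij, ?_, ?_⟩
  · show Finset.image f S = S
    apply Finset.eq_of_subset_of_card_le
    · intro x hx
      obtain ⟨y, hy, rfl⟩ := Finset.mem_image.1 hx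
      exact hfS y hy
    · rw [Finset.card_image_of_injective _ hfinj]
  · show Finset.image f R = R'
    apply Finset.eq_of_subset_of_card_le
    · intro x hx
      obtain ⟨y, hy, rfl⟩ := Finset.mem_image.1 hx
      exact hfR y hy
    · rw [Finset.card_image_of_injective _ hfinj, hcard]

lemma image_mem_powersetCard {S : Finset (ZMod p)} {m : ℕ}
    {τ : (Fin m → Finset (ZMod p)) × (Fin m → ZMod p)}
    (hτ : τ ∈ partitionTransversals p S m) :
    Finset.image τ.2 Finset.univ ∈ S.powersetCard m := by
  obtain ⟨hbal, htrans⟩ := mem_pt.1 hτ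
  rw [Finset.mem_powersetCard]
  constructor
  · intro x hx
    obtain ⟨i, _, rfl⟩ := Finset.mem_image.1 hx
    exact part_subset hbal i (htrans i)
  · have hinj : Function.Injective τ.2 := by
      intro i j hij
      by_contra h
      have := hbal.1 i j h
      rw [Finset.disjoint_left] at this
      exact this (htrans i) (hij ▸ htrans j)
    rw [Finset.card_image_of_injective _ hinj, Finset.card_univ, Fintype.card_fin]

end Aux

theorem stmt18 (p : ℕ) [Fact p.Prime] (S : Finset (ZMod p)) (hS : 2 ≤ S.card)
    (m : ℕ) (hm : 0 < m) (hm4 : 4 * m ≤ S.card) (R : Finset (ZMod p))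
    (hRS : R ⊆ S) (hR : R.card = m) :
    (((partitionTransversals p S m).filter fun τ =>
        Finset.image τ.2 Finset.univ = R).card : ℝ) /
      ((partitionTransversals p S m).card : ℝ) = 1 / (S.card.choose m : ℝ) := by
  haveI : NeZero p := ⟨(Fact.out : p.Prime).ne_zero⟩
  have hmS : m ≤ S.card := by omega
  set c := ((partitionTransversals p S m).filter fun τ =>
      Finset.image τ.2 Finset.univ = R).card with hc
  -- all fibers have the same card
  have hfiber : ∀ R' ∈ S.powersetCard m,
      ((partitionTransversals p S m).filter fun τ =>
        Finset.image τ.2 Finset.univ = R').card = c := by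
    intro R' hR'
    rw [Finset.mem_powersetCard] at hR'
    obtain ⟨σ, hσS, hσR⟩ := exists_perm S R R' hRS hR'.1 (hR.trans hR'.2.symm)
    rw [hc, perm_filter_card S m σ hσS R, hσR]
  have htotal : (partitionTransversals p S m).card = S.card.choose m * c := by
    rw [Finset.card_eq_sum_card_fiberwise
      (fun τ hτ => image_mem_powersetCard (p := p) hτ)]
    rw [Finset.sum_congr rfl hfiber, Finset.sum_const, smul_eq_mul,
      Finset.card_powersetCard]
  have hcpos : 0 < c := by
    obtain ⟨τ, hτ, hτR⟩ := exists_pair S m hm hmS R hRS hR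
    rw [hc, Finset.card_pos]
    exact ⟨τ, Finset.mem_filter.2 ⟨hτ, hτR⟩⟩
  have hchoose : 0 < S.card.choose m := Nat.choose_pos hmS
  rw [htotal]
  push_cast
  rw [div_eq_div_iff (by positivity) (by positivity)]
  ring
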